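/- For every n ≥ 2, the crossing-number distribution over permutations of [n] with σ(2)=1 satisfies ∑_{σ∈S_n, σ(2)=1} q^{crs(σ)} = q·∑_{σ∈S_{n−1}} q^{crs(σ)} + (1−q)·∑_{σ∈S_{n−2}} q^{crs(σ)}. -/

import Mathlib

open Finset Polynomial Equiv

attribute [local instance] Classical.propDecidable

def isCrossing {n : ℕ} (σ : Equiv.Perm (Fin n)) (i j : Fin n) : Prop :=
  (i < j ∧ j < σ i ∧ σ i < σ j) ∨ (σ i < σ j ∧ σ j ≤ i ∧ i < j)

noncomputable def crs {n : ℕ} (σ : Equiv.Perm (Fin n)) : ℕ :=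
  (Finset.univ.filter (fun p : Fin n × Fin n => isCrossing σ p.1 p.2)).card

def avoids123 {n : ℕ} (σ : Equiv.Perm (Fin n)) : Prop :=
  ¬ ∃ i j k : Fin n, i < j ∧ j < k ∧ σ i < σ j ∧ σ j < σ k

def avoids132 {n : ℕ} (σ : Equiv.Perm (Fin n)) : Prop :=
  ¬ ∃ i j k : Fin n, i < j ∧ j < k ∧ σ i < σ k ∧ σ k < σ j

def avoids213 {n : ℕ} (σ : Equiv.Perm (Fin n)) : Prop :=
  ¬ ∃ i j k : Fin n, i < j ∧ j < k ∧ σ j < σ i ∧ σ i < σ k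

def avoids231 {n : ℕ} (σ : Equiv.Perm (Fin n)) : Prop :=
  ¬ ∃ i j k : Fin n, i < j ∧ j < k ∧ σ k < σ i ∧ σ i < σ j

def avoids312 {n : ℕ} (σ : Equiv.Perm (Fin n)) : Prop :=
  ¬ ∃ i j k : Fin n, i < j ∧ j < k ∧ σ j < σ k ∧ σ k < σ i

def avoids321 {n : ℕ} (σ : Equiv.Perm (Fin n)) : Prop :=
  ¬ ∃ i j k : Fin n, i < j ∧ j < k ∧ σ k < σ j ∧ σ j < σ i

noncomputable def ut {n : ℕ} (σ : Equiv.Perm (Fin n)) : ℕ :=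
  (Finset.univ.filter (fun i : Fin n => σ⁻¹ i < i ∧ i < σ i)).card

noncomputable def lt' {n : ℕ} (σ : Equiv.Perm (Fin n)) : ℕ :=
  (Finset.univ.filter (fun i : Fin n => σ i < i ∧ i < σ⁻¹ i)).card


section A

variable {m : ℕ}

lemma crossing_succ (σ : Equiv.Perm (Fin (m+1))) (ρ : Equiv.Perm (Fin m))
    (h : ∀ i : Fin m, σ i.succ = (ρ i).succ) (i j : Fin m) :
    isCrossing σ i.succ j.succ ↔ isCrossing ρ i j := by
  simp only [isCrossing, Fin.lt_def, Fin.le_def, h, Fin.val_succ]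
  omega

lemma cross_ne_zero (σ : Equiv.Perm (Fin (m+1))) (h0 : σ 0 = 0) {i j : Fin (m+1)}
    (h : isCrossing σ i j) : i ≠ 0 ∧ j ≠ 0 := by
  constructor
  · rintro rfl
    rcases h with ⟨h1, h2, h3⟩ | ⟨h1, h2, h3⟩
    · rw [h0] at h2; exact absurd h2 (Fin.not_lt_zero _)
    · rw [h0] at h1
      exact absurd (lt_of_lt_of_le h1 h2) (Fin.not_lt_zero _)
  · rintro rfl
    rcases h with ⟨h1, _⟩ | ⟨_, _, h1⟩ <;> exact absurd h1 (Fin.not_lt_zero _)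

lemma crs_decomp (ρ : Equiv.Perm (Fin m)) :
    crs (Equiv.Perm.decomposeFin.symm (0, ρ)) = crs ρ := by
  set σ := Equiv.Perm.decomposeFin.symm (0, ρ) with hσdef
  have hσ0 : σ 0 = 0 := Equiv.Perm.decomposeFin_symm_apply_zero 0 ρ
  have hσs : ∀ i : Fin m, σ i.succ = (ρ i).succ := by
    intro i
    rw [hσdef, Equiv.Perm.decomposeFin_symm_apply_succ, Equiv.swap_self]
    rfl
  symm
  unfold crs
  apply Finset.card_bij (fun (p : Fin m × Fin m) _ => (p.1.succ, p.2.succ))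
  · intro p hp
    simp only [Finset.mem_filter, Finset.mem_univ, true_and] at hp ⊢
    exact (crossing_succ σ ρ hσs p.1 p.2).mpr hp
  · intro p _ q _ h
    rw [Prod.ext_iff] at h ⊢
    exact ⟨Fin.succ_injective _ h.1, Fin.succ_injective _ h.2⟩
  · intro b hb
    simp only [Finset.mem_filter, Finset.mem_univ, true_and] at hb
    obtain ⟨b1, b2⟩ := b
    obtain ⟨h1, h2⟩ := cross_ne_zero σ hσ0 hb
    obtain ⟨i, rfl⟩ := Fin.eq_succ_of_ne_zero h1
    obtain ⟨j, rfl⟩ := Fin.eq_succ_of_ne_zero h2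
    exact ⟨(i, j), Finset.mem_filter.mpr ⟨Finset.mem_univ _,
      (crossing_succ σ ρ hσs i j).mp hb⟩, rfl⟩

lemma sumA :
    ∑ τ ∈ Finset.univ.filter (fun τ : Equiv.Perm (Fin (m+1)) => τ 0 = 0),
      (X : Polynomial ℤ) ^ crs τ
      = ∑ ρ : Equiv.Perm (Fin m), (X : Polynomial ℤ) ^ crs ρ := by
  symm
  apply Finset.sum_bij (fun (ρ : Equiv.Perm (Fin m)) _ => Equiv.Perm.decomposeFin.symm (0, ρ))
  · intro ρ _
    simp only [Finset.mem_filter, Finset.mem_univ, true_and]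
    exact Equiv.Perm.decomposeFin_symm_apply_zero 0 ρ
  · intro a _ b _ h
    have h2 : ((0 : Fin (m+1)), a) = (0, b) := Equiv.Perm.decomposeFin.symm.injective h
    exact (Prod.ext_iff.mp h2).2
  · intro τ hτ
    simp only [Finset.mem_filter, Finset.mem_univ, true_and] at hτ
    refine ⟨(Equiv.Perm.decomposeFin τ).2, Finset.mem_univ _, ?_⟩
    have key : Equiv.Perm.decomposeFin.symm
        ((Equiv.Perm.decomposeFin τ).1, (Equiv.Perm.decomposeFin τ).2) = τ := by
      rw [Prod.mk.eta]; exact Equiv.symm_apply_apply _ _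
    have h1 : (Equiv.Perm.decomposeFin τ).1 = 0 := by
      have := Equiv.Perm.decomposeFin_symm_apply_zero
        (Equiv.Perm.decomposeFin τ).1 (Equiv.Perm.decomposeFin τ).2
      rw [key] at this
      rw [← this]; exact hτ
    rw [← h1, key]
  · intro ρ _
    rw [crs_decomp]

end A

section B

variable {m : ℕ}

/-- embedding of positions: skips position 1 -/
def gg (k : Fin (m+1)) : Fin (m+2) := Fin.cases 0 (fun i => i.succ.succ) k

/-- the permutation of Fin (m+2) with σ 1 = 0 built from τ -/
def phi (τ : Equiv.Perm (Fin (m+1))) : Equiv.Perm (Fin (m+2)) :=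
  Equiv.Perm.decomposeFin.symm (0, τ) * Equiv.swap 0 1

lemma gg_zero : (gg 0 : Fin (m+2)) = 0 := rfl

lemma gg_succ (i : Fin m) : (gg i.succ : Fin (m+2)) = i.succ.succ := rfl

lemma phi_one (τ : Equiv.Perm (Fin (m+1))) : phi τ 1 = 0 := by
  have : (Equiv.swap (0 : Fin (m+2)) 1) 1 = 0 := Equiv.swap_apply_right 0 1
  simp only [phi, Equiv.Perm.mul_apply, this]
  exact Equiv.Perm.decomposeFin_symm_apply_zero 0 τ

lemma succ_zero_eq_one' : ((0 : Fin (m+1)).succ : Fin (m+2)) = 1 := by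
  ext; simp [Fin.val_succ]

lemma phi_gg (τ : Equiv.Perm (Fin (m+1))) (k : Fin (m+1)) :
    phi τ (gg k) = (τ k).succ := by
  induction k using Fin.cases with
  | zero =>
    rw [gg_zero]
    have h1 : (Equiv.swap (0 : Fin (m+2)) 1) 0 = 1 := Equiv.swap_apply_left 0 1
    simp only [phi, Equiv.Perm.mul_apply, h1, ← succ_zero_eq_one',
      Equiv.Perm.decomposeFin_symm_apply_succ, Equiv.swap_self]
    rfl
  | succ i =>
    rw [gg_succ]
    have hne0 : (i.succ.succ : Fin (m+2)) ≠ 0 := Fin.succ_ne_zero _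
    have hne1 : (i.succ.succ : Fin (m+2)) ≠ 1 := by
      rw [Fin.ne_iff_vne]
      simp [Fin.val_succ, Fin.val_one]
    have h1 : (Equiv.swap (0 : Fin (m+2)) 1) i.succ.succ = i.succ.succ :=
      Equiv.swap_apply_of_ne_of_ne hne0 hne1
    simp only [phi, Equiv.Perm.mul_apply, h1,
      Equiv.Perm.decomposeFin_symm_apply_succ, Equiv.swap_self]
    rfl

lemma gg_ne_one (k : Fin (m+1)) : gg k ≠ (1 : Fin (m+2)) := by
  induction k using Fin.cases with
  | zero => rw [gg_zero, Fin.ne_iff_vne]; simp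
  | succ i => rw [gg_succ, Fin.ne_iff_vne]; simp [Fin.val_succ]

lemma gg_surj (x : Fin (m+2)) (hx : x ≠ 1) : ∃ k, gg k = x := by
  induction x using Fin.cases with
  | zero => exact ⟨0, rfl⟩
  | succ y =>
    induction y using Fin.cases with
    | zero => exact absurd succ_zero_eq_one' hx
    | succ z => exact ⟨z.succ, rfl⟩

lemma gg_inj : Function.Injective (gg : Fin (m+1) → Fin (m+2)) := by
  intro a b h
  induction a using Fin.cases with
  | zero =>
    induction b using Fin.cases with
    | zero => rfl
    | succ j => rw [gg_zero, gg_succ] at h; exact absurd h.symm (Fin.succ_ne_zero _)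
  | succ i =>
    induction b using Fin.cases with
    | zero => rw [gg_zero, gg_succ] at h; exact absurd h (Fin.succ_ne_zero _)
    | succ j =>
      rw [gg_succ, gg_succ] at h
      rw [Fin.succ_injective _ (Fin.succ_injective _ h)]

lemma phi_zero (τ : Equiv.Perm (Fin (m+1))) : phi τ 0 = (τ 0).succ := phi_gg τ 0

lemma phi_ss (τ : Equiv.Perm (Fin (m+1))) (i : Fin m) :
    phi τ i.succ.succ = (τ i.succ).succ := phi_gg τ i.succ

lemma crossing_gg (τ : Equiv.Perm (Fin (m+1))) (i j : Fin (m+1)) :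
    isCrossing (phi τ) (gg i) (gg j) ↔ isCrossing τ i j := by
  induction i using Fin.cases with
  | zero =>
    induction j using Fin.cases with
    | zero =>
      simp only [isCrossing, phi_gg, phi_zero, phi_ss, gg_zero, Fin.lt_def, Fin.le_def, Fin.val_succ, Fin.val_zero]
      omega
    | succ j' =>
      simp only [isCrossing, phi_gg, phi_zero, phi_ss, gg_zero, gg_succ, Fin.lt_def, Fin.le_def, Fin.val_succ,
        Fin.val_zero]
      omega
  | succ i' =>
    induction j using Fin.cases with
    | zero =>
      simp only [isCrossing, phi_gg, phi_zero, phi_ss, gg_zero, gg_succ, Fin.lt_def, Fin.le_def, Fin.val_succ,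
        Fin.val_zero]
      omega
    | succ j' =>
      simp only [isCrossing, phi_gg, phi_zero, phi_ss, gg_succ, Fin.lt_def, Fin.le_def, Fin.val_succ]
      omega

end B

section C

variable {m : ℕ}

lemma phi_j0 (τ : Equiv.Perm (Fin (m+1))) : phi τ (gg (τ⁻¹ 0)) = 1 := by
  rw [phi_gg, ← Equiv.Perm.mul_apply, mul_inv_cancel, Equiv.Perm.one_apply, succ_zero_eq_one']

lemma cross_special (τ : Equiv.Perm (Fin (m+1))) (i j : Fin (m+2)) :
    (isCrossing (phi τ) i j ∧ ¬(i ≠ 1 ∧ j ≠ 1)) ↔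
      (τ 0 ≠ 0 ∧ i = 1 ∧ j = gg (τ⁻¹ 0)) := by
  have hone : phi τ 1 = 0 := phi_one τ
  have hj0 : phi τ (gg (τ⁻¹ 0)) = 1 := phi_j0 τ
  constructor
  · rintro ⟨hc, hne⟩
    push_neg at hne
    have hj1 : j ≠ 1 := by
      rintro rfl
      rcases hc with ⟨_, _, h3⟩ | ⟨h3, _, _⟩ <;>
      · rw [hone] at h3; exact absurd h3 (Fin.not_lt_zero _)
    have hi1 : i = 1 := by
      by_contra hi
      exact hj1 (hne hi)
    subst hi1
    rcases hc with ⟨_, h2, _⟩ | ⟨h1, h2, h3⟩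
    · rw [hone] at h2; exact absurd h2 (Fin.not_lt_zero _)
    · rw [hone] at h1
      -- h1 : 0 < phi τ j, h2 : phi τ j ≤ 1, h3 : 1 < j
      have hval : phi τ j = 1 := by
        rw [Fin.lt_def] at h1
        rw [Fin.le_def] at h2
        rw [Fin.ext_iff]
        simp only [Fin.val_one, Fin.val_zero] at *
        omega
      have hjeq : j = gg (τ⁻¹ 0) := by
        apply (phi τ).injective
        rw [hval, hj0]
      refine ⟨?_, rfl, hjeq⟩
      intro h00
      have : τ⁻¹ 0 = 0 := by rw [Equiv.Perm.inv_eq_iff_eq]; exact h00.symm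
      rw [hjeq, this, gg_zero] at h3
      exact absurd h3 (Fin.not_lt_zero _)
  · rintro ⟨h00, rfl, rfl⟩
    have hinv : τ⁻¹ 0 ≠ 0 := fun h => h00 ((Equiv.Perm.inv_eq_iff_eq.mp h).symm)
    obtain ⟨k, hk⟩ := Fin.eq_succ_of_ne_zero hinv
    have h1j : (1 : Fin (m+2)) < gg (τ⁻¹ 0) := by
      rw [hk, gg_succ, Fin.lt_def]
      simp [Fin.val_succ]
    refine ⟨Or.inr ⟨?_, ?_, h1j⟩, ?_⟩
    · rw [hone, hj0]; exact Fin.one_pos'.trans_le le_rfl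
    · rw [hj0]
    · push_neg
      intro h; exact absurd rfl h

lemma crs_phi (τ : Equiv.Perm (Fin (m+1))) :
    crs (phi τ) = crs τ + (if τ 0 = 0 then 0 else 1) := by
  classical
  have hsplit := Finset.card_filter_add_card_filter_not
    (s := Finset.univ.filter (fun p : Fin (m+2) × Fin (m+2) => isCrossing (phi τ) p.1 p.2))
    (p := fun p => p.1 ≠ 1 ∧ p.2 ≠ 1)
  rw [Finset.filter_filter, Finset.filter_filter] at hsplit
  have hA : (Finset.univ.filter (fun p : Fin (m+2) × Fin (m+2) =>
      isCrossing (phi τ) p.1 p.2 ∧ p.1 ≠ 1 ∧ p.2 ≠ 1)).card = crs τ := by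
    symm
    unfold crs
    apply Finset.card_bij (fun (p : Fin (m+1) × Fin (m+1)) _ => (gg p.1, gg p.2))
    · intro p hp
      simp only [Finset.mem_filter, Finset.mem_univ, true_and] at hp ⊢
      exact ⟨(crossing_gg τ p.1 p.2).mpr hp, gg_ne_one p.1, gg_ne_one p.2⟩
    · intro p _ q _ h
      rw [Prod.ext_iff] at h ⊢
      exact ⟨gg_inj h.1, gg_inj h.2⟩
    · intro b hb
      simp only [Finset.mem_filter, Finset.mem_univ, true_and] at hb
      obtain ⟨hc, h1, h2⟩ := hb
      obtain ⟨k1, hk1⟩ := gg_surj b.1 h1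
      obtain ⟨k2, hk2⟩ := gg_surj b.2 h2
      refine ⟨(k1, k2), Finset.mem_filter.mpr ⟨Finset.mem_univ _, ?_⟩, ?_⟩
      · rw [← crossing_gg τ k1 k2] at *
        rw [hk1, hk2]; exact hc
      · rw [Prod.ext_iff]; exact ⟨hk1, hk2⟩
  have hB : (Finset.univ.filter (fun p : Fin (m+2) × Fin (m+2) =>
      isCrossing (phi τ) p.1 p.2 ∧ ¬(p.1 ≠ 1 ∧ p.2 ≠ 1))).card
      = (if τ 0 = 0 then 0 else 1) := by
    by_cases h0 : τ 0 = 0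
    · rw [if_pos h0]
      convert Finset.card_empty
      ext p
      simp only [Finset.mem_filter, Finset.mem_univ, true_and, Finset.notMem_empty, iff_false]
      rw [cross_special]
      rintro ⟨h, _⟩; exact h h0
    · rw [if_neg h0]
      have : (Finset.univ.filter (fun p : Fin (m+2) × Fin (m+2) =>
          isCrossing (phi τ) p.1 p.2 ∧ ¬(p.1 ≠ 1 ∧ p.2 ≠ 1)))
          = {((1 : Fin (m+2)), gg (τ⁻¹ 0))} := by
        ext p
        simp only [Finset.mem_filter, Finset.mem_univ, true_and, Finset.mem_singleton]
        rw [cross_special, Prod.ext_iff]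
        constructor
        · rintro ⟨_, h1, h2⟩; exact ⟨h1, h2⟩
        · rintro ⟨h1, h2⟩; exact ⟨h0, h1, h2⟩
      rw [this, Finset.card_singleton]
  rw [← hA, ← hB, hsplit]
  rfl

end C

section D

variable {m : ℕ}

lemma phi_injective : Function.Injective (phi : Equiv.Perm (Fin (m+1)) → Equiv.Perm (Fin (m+2))) := by
  intro a b h
  unfold phi at h
  have h2 := mul_right_cancel h
  have h3 : ((0 : Fin (m+2)), a) = (0, b) := Equiv.Perm.decomposeFin.symm.injective h2
  exact (Prod.ext_iff.mp h3).2

lemma sumB :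
    ∑ σ ∈ Finset.univ.filter (fun σ : Equiv.Perm (Fin (m+2)) => σ 1 = 0),
      (X : Polynomial ℤ) ^ crs σ
      = ∑ τ : Equiv.Perm (Fin (m+1)),
        (X : Polynomial ℤ) ^ (crs τ + if τ 0 = 0 then 0 else 1) := by
  symm
  apply Finset.sum_bij (fun (τ : Equiv.Perm (Fin (m+1))) _ => phi τ)
  · intro τ _
    simp only [Finset.mem_filter, Finset.mem_univ, true_and]
    exact phi_one τ
  · intro a _ b _ h
    exact phi_injective h
  · intro σ hσ
    simp only [Finset.mem_filter, Finset.mem_univ, true_and] at hσ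
    refine ⟨(Equiv.Perm.decomposeFin (σ * Equiv.swap 0 1)).2, Finset.mem_univ _, ?_⟩
    have key : Equiv.Perm.decomposeFin.symm
        ((Equiv.Perm.decomposeFin (σ * Equiv.swap 0 1)).1,
         (Equiv.Perm.decomposeFin (σ * Equiv.swap 0 1)).2) = σ * Equiv.swap 0 1 := by
      rw [Prod.mk.eta]; exact Equiv.symm_apply_apply _ _
    have h1 : (Equiv.Perm.decomposeFin (σ * Equiv.swap 0 1)).1 = 0 := by
      have h2 := Equiv.Perm.decomposeFin_symm_apply_zero
        (Equiv.Perm.decomposeFin (σ * Equiv.swap 0 1)).1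
        (Equiv.Perm.decomposeFin (σ * Equiv.swap 0 1)).2
      rw [key] at h2
      rw [← h2, Equiv.Perm.mul_apply, Equiv.swap_apply_left]
      exact hσ
    unfold phi
    rw [h1] at key
    rw [key, mul_assoc, Equiv.swap_mul_self, mul_one]
  · intro τ _
    rw [crs_phi]

end D

theorem sum_second_position_one (n : ℕ) (hn : 2 ≤ n) :
    ∑ σ ∈ Finset.univ.filter
        (fun σ : Equiv.Perm (Fin n) => σ (⟨1, by omega⟩ : Fin n) = (⟨0, by omega⟩ : Fin n)),
        (Polynomial.X : Polynomial ℤ) ^ crs σ =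
      Polynomial.X * (∑ σ : Equiv.Perm (Fin (n - 1)), (Polynomial.X : Polynomial ℤ) ^ crs σ) +
        (1 - Polynomial.X) *
          ∑ σ : Equiv.Perm (Fin (n - 2)), (Polynomial.X : Polynomial ℤ) ^ crs σ := by
  obtain ⟨m, rfl⟩ : ∃ m, n = m + 2 := ⟨n - 2, by omega⟩
  have e1 : (⟨1, by omega⟩ : Fin (m+2)) = 1 := by
    rw [Fin.ext_iff, Fin.val_one]
  have e0 : (⟨0, by omega⟩ : Fin (m+2)) = 0 := by
    rw [Fin.ext_iff, Fin.val_zero]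
  have hA : (∑ σ : Equiv.Perm (Fin (m+2-1)), (X : Polynomial ℤ) ^ crs σ)
      = ∑ σ : Equiv.Perm (Fin (m+1)), (X : Polynomial ℤ) ^ crs σ := rfl
  have hB : (∑ σ : Equiv.Perm (Fin (m+2-2)), (X : Polynomial ℤ) ^ crs σ)
      = ∑ σ : Equiv.Perm (Fin m), (X : Polynomial ℤ) ^ crs σ := rfl
  rw [hA, hB]
  simp only [e1, e0]
  rw [sumB]
  have h1 : ∑ τ ∈ Finset.univ.filter (fun τ : Equiv.Perm (Fin (m+1)) => τ 0 = 0),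
      (X : Polynomial ℤ) ^ crs τ = ∑ ρ : Equiv.Perm (Fin m), (X : Polynomial ℤ) ^ crs ρ := sumA
  have h2 := Finset.sum_filter_add_sum_filter_not Finset.univ
    (fun τ : Equiv.Perm (Fin (m+1)) => τ 0 = 0) (fun τ => (X : Polynomial ℤ) ^ crs τ)
  have h3 := Finset.sum_filter_add_sum_filter_not Finset.univ
    (fun τ : Equiv.Perm (Fin (m+1)) => τ 0 = 0)
    (fun τ => (X : Polynomial ℤ) ^ (crs τ + if τ 0 = 0 then 0 else 1))
  rw [← h3]
  have h4 : ∑ τ ∈ Finset.univ.filter (fun τ : Equiv.Perm (Fin (m+1)) => τ 0 = 0),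
      (X : Polynomial ℤ) ^ (crs τ + if τ 0 = 0 then 0 else 1)
      = ∑ τ ∈ Finset.univ.filter (fun τ : Equiv.Perm (Fin (m+1)) => τ 0 = 0),
      (X : Polynomial ℤ) ^ crs τ := by
    apply Finset.sum_congr rfl
    intro τ hτ
    rw [Finset.mem_filter] at hτ
    rw [if_pos hτ.2, Nat.add_zero]
  have h5 : ∑ τ ∈ Finset.univ.filter (fun τ : Equiv.Perm (Fin (m+1)) => ¬ τ 0 = 0),
      (X : Polynomial ℤ) ^ (crs τ + if τ 0 = 0 then 0 else 1)
      = X * ∑ τ ∈ Finset.univ.filter (fun τ : Equiv.Perm (Fin (m+1)) => ¬ τ 0 = 0),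
      (X : Polynomial ℤ) ^ crs τ := by
    rw [Finset.mul_sum]
    apply Finset.sum_congr rfl
    intro τ hτ
    rw [Finset.mem_filter] at hτ
    rw [if_neg hτ.2, pow_succ, mul_comm]
  rw [h4, h5, h1]
  have h6 : ∑ τ ∈ Finset.univ.filter (fun τ : Equiv.Perm (Fin (m+1)) => ¬ τ 0 = 0),
      (X : Polynomial ℤ) ^ crs τ
      = (∑ τ : Equiv.Perm (Fin (m+1)), (X : Polynomial ℤ) ^ crs τ)
        - ∑ ρ : Equiv.Perm (Fin m), (X : Polynomial ℤ) ^ crs ρ := by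
    rw [eq_sub_iff_add_eq, ← h1, add_comm]
    exact h2
  rw [h6]
  ring
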